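/- If a four-party pure state |ψ⟩_{ABCD} has Schmidt rank 1 across the bipartition AD : BC (i.e., r_{AD} = 1), then r_{AB} = r_A · r_B. Consequently, no pure state has 0-entropy vector proportional to (1,1,1,1,1,1,0) in the ordering (S_0(A), S_0(B), S_0(C), S_0(D), S_0(AB), S_0(AC), S_0(AD)). -/

import Mathlib

open Matrix

/-- Reshapings of a four-party state across the seven bipartitions. -/
noncomputable def mA {dA dB dC dD : ℕ} (ψ : Fin dA → Fin dB → Fin dC → Fin dD → ℂ) :
    Matrix (Fin dA) (Fin dB × Fin dC × Fin dD) ℂ :=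
  Matrix.of fun a x => ψ a x.1 x.2.1 x.2.2

noncomputable def mB {dA dB dC dD : ℕ} (ψ : Fin dA → Fin dB → Fin dC → Fin dD → ℂ) :
    Matrix (Fin dB) (Fin dA × Fin dC × Fin dD) ℂ :=
  Matrix.of fun b x => ψ x.1 b x.2.1 x.2.2

noncomputable def mC {dA dB dC dD : ℕ} (ψ : Fin dA → Fin dB → Fin dC → Fin dD → ℂ) :
    Matrix (Fin dC) (Fin dA × Fin dB × Fin dD) ℂ :=
  Matrix.of fun c x => ψ x.1 x.2.1 c x.2.2

noncomputable def mD {dA dB dC dD : ℕ} (ψ : Fin dA → Fin dB → Fin dC → Fin dD → ℂ) :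
    Matrix (Fin dD) (Fin dA × Fin dB × Fin dC) ℂ :=
  Matrix.of fun d x => ψ x.1 x.2.1 x.2.2 d

noncomputable def mAB {dA dB dC dD : ℕ} (ψ : Fin dA → Fin dB → Fin dC → Fin dD → ℂ) :
    Matrix (Fin dA × Fin dB) (Fin dC × Fin dD) ℂ :=
  Matrix.of fun p x => ψ p.1 p.2 x.1 x.2

noncomputable def mAC {dA dB dC dD : ℕ} (ψ : Fin dA → Fin dB → Fin dC → Fin dD → ℂ) :
    Matrix (Fin dA × Fin dC) (Fin dB × Fin dD) ℂ :=
  Matrix.of fun p x => ψ p.1 x.1 p.2 x.2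

noncomputable def mAD {dA dB dC dD : ℕ} (ψ : Fin dA → Fin dB → Fin dC → Fin dD → ℂ) :
    Matrix (Fin dA × Fin dD) (Fin dB × Fin dC) ℂ :=
  Matrix.of fun p x => ψ p.1 x.1 x.2 p.2


open Matrix Module
open scoped TensorProduct

lemma rank_eq_finrank_span_cols_transpose {R m n : Type*} [CommSemiring R] [Fintype m]
    [Fintype n] (A : Matrix m n R) :
    A.rank = finrank R (Submodule.span R (Set.range Aᵀ)) :=
  rank_eq_finrank_span_cols A

section Aux

variable {K : Type*} [Field K]

lemma rank_submatrix_id_equiv {m n n' : Type*} [Fintype m] [Fintype n] [Fintype n']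
    (M : Matrix m n K) (e : n' ≃ n) : (M.submatrix id e).rank = M.rank := by
  have h : (M.submatrix id e)ᵀ = Mᵀ ∘ e := by
    ext j i; rfl
  have hr : Set.range (M.submatrix id ⇑e)ᵀ = Set.range Mᵀ := by
    rw [h]; exact e.surjective.range_comp _
  rw [rank_eq_finrank_span_cols_transpose, rank_eq_finrank_span_cols_transpose, hr]

lemma matrix_eq_zero_of_rank_eq_zero {m n : Type*} [Fintype m] [Fintype n]
    (M : Matrix m n K) (h : M.rank = 0) : M = 0 := by
  rw [rank_eq_finrank_span_cols] at h
  have hbot : Submodule.span K (Set.range Mᵀ) = ⊥ := Submodule.finrank_eq_zero.mp h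
  ext i j
  have hmem : Mᵀ j ∈ (⊥ : Submodule K (m → K)) :=
    hbot ▸ Submodule.subset_span (Set.mem_range_self j)
  have := congrFun ((Submodule.mem_bot K).mp hmem) i
  simpa using this

lemma rank_one_decomp {m n : Type*} [Fintype m] [Fintype n]
    (M : Matrix m n K) (h : M.rank = 1) :
    ∃ u : m → K, ∃ v : n → K, u ≠ 0 ∧ v ≠ 0 ∧ ∀ i j, M i j = u i * v j := by
  rw [rank_eq_finrank_span_cols] at h
  obtain ⟨u0, hu0, hspan⟩ := finrank_eq_one_iff'.mp h
  choose c hc using fun j => hspan ⟨Mᵀ j, Submodule.subset_span (Set.mem_range_self j)⟩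
  have hMij : ∀ i j, M i j = (u0 : m → K) i * c j := by
    intro i j
    have := congrFun (congrArg Subtype.val (hc j)) i
    simpa [mul_comm] using this.symm
  refine ⟨(u0 : m → K), c, ?_, ?_, hMij⟩
  · intro h0
    exact hu0 (Subtype.ext h0)
  · intro h0
    have hz : ∀ j, Mᵀ j = 0 := by
      intro j; funext i
      simp [Matrix.transpose_apply, hMij, congrFun h0 j]
    have hsub : Set.range Mᵀ ⊆ ({0} : Set (m → K)) := by
      rintro _ ⟨j, rfl⟩; simp [hz j]
    have hle : Submodule.span K (Set.range Mᵀ) ≤ ⊥ := by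
      rw [← Submodule.span_zero_singleton (R := K) (M := m → K)]
      exact Submodule.span_mono hsub
    have : (u0 : m → K) = 0 := (Submodule.mem_bot K).mp (hle u0.2)
    exact hu0 (Subtype.ext this)

lemma rank_eq_of_cols_smul {m n q : Type*} [Fintype m] [Fintype n] [Fintype q]
    (M : Matrix m n K) (N : Matrix m q K) (g : q → K) (σ : q → n)
    (hN : ∀ x i, N i x = g x * M i (σ x))
    (hsurj : ∀ j, ∃ x, σ x = j ∧ g x ≠ 0) :
    N.rank = M.rank := by
  have hspan : Submodule.span K (Set.range Nᵀ) = Submodule.span K (Set.range Mᵀ) := by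
    apply le_antisymm
    · rw [Submodule.span_le]
      rintro _ ⟨x, rfl⟩
      have hcol : Nᵀ x = g x • Mᵀ (σ x) := by
        funext i; simp [Matrix.transpose_apply, hN]
      rw [hcol]
      exact Submodule.smul_mem _ _ (Submodule.subset_span (Set.mem_range_self _))
    · rw [Submodule.span_le]
      rintro _ ⟨j, rfl⟩
      obtain ⟨x, rfl, hx⟩ := hsurj j
      have hcol : Mᵀ (σ x) = (g x)⁻¹ • Nᵀ x := by
        funext i
        simp [Matrix.transpose_apply, hN]
        field_simp
      rw [hcol]
      exact Submodule.smul_mem _ _ (Submodule.subset_span (Set.mem_range_self _))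
  rw [rank_eq_finrank_span_cols_transpose, rank_eq_finrank_span_cols_transpose, hspan]

set_option synthInstance.maxHeartbeats 1000000 in
set_option maxHeartbeats 1000000 in
lemma rank_kron {α β α' β' : Type*} [Fintype α] [Fintype β] [Fintype α'] [Fintype β']
    (E : Matrix α α' K) (F : Matrix β β' K) :
    (Matrix.of fun (p : α × β) (q : α' × β') => E p.1 q.1 * F p.2 q.2).rank
      = E.rank * F.rank := by
  classical
  set G : Matrix (α × β) (α' × β') K :=
    Matrix.of fun (p : α × β) (q : α' × β') => E p.1 q.1 * F p.2 q.2 with hG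
  let Φ : ((α → K) ⊗[K] (β → K)) ≃ₗ[K] (α × β → K) :=
    (TensorProduct.congr (Finsupp.linearEquivFunOnFinite K K α).symm
        (Finsupp.linearEquivFunOnFinite K K β).symm).trans
      ((finsuppTensorFinsupp' K α β).trans (Finsupp.linearEquivFunOnFinite K K (α × β)))
  have hΦ : ∀ (x : α → K) (y : β → K) (p : α × β), Φ (x ⊗ₜ[K] y) p = x p.1 * y p.2 := by
    intro x y p
    obtain ⟨p1, p2⟩ := p
    exact finsuppTensorFinsupp'_apply_apply K α β _ _ p1 p2
  set U := Submodule.span K (Set.range Eᵀ) with hU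
  set V := Submodule.span K (Set.range Fᵀ) with hV
  set W := Submodule.span K (Set.range Gᵀ) with hW
  have hcolG : ∀ q : α' × β', Gᵀ q = Φ ((Eᵀ q.1) ⊗ₜ[K] (Fᵀ q.2)) := by
    intro q; funext p
    simp [hΦ, Matrix.transpose_apply, hG]
  have key : W = Submodule.map (Φ : ((α → K) ⊗[K] (β → K)) →ₗ[K] (α × β → K))
      (LinearMap.range (TensorProduct.mapIncl U V)) := by
    apply le_antisymm
    · rw [hW, Submodule.span_le]
      rintro _ ⟨q, rfl⟩
      refine Submodule.mem_map.mpr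
        ⟨TensorProduct.mapIncl U V
          ((⟨Eᵀ q.1, Submodule.subset_span (Set.mem_range_self _)⟩ : U) ⊗ₜ[K]
            (⟨Fᵀ q.2, Submodule.subset_span (Set.mem_range_self _)⟩ : V)),
          LinearMap.mem_range_self _ _, ?_⟩
      rw [hcolG q]
      rfl
    · rw [Submodule.map_le_iff_le_comap, TensorProduct.range_mapIncl,
        Submodule.map₂_eq_span_image2, Submodule.span_le]
      rintro _ ⟨x, hx, y, hy, rfl⟩
      show Φ (x ⊗ₜ[K] y) ∈ W
      induction hx using Submodule.span_induction with
      | mem x hxm =>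
        obtain ⟨a', rfl⟩ := hxm
        induction hy using Submodule.span_induction with
        | mem y hym =>
          obtain ⟨b', rfl⟩ := hym
          have : Φ ((Eᵀ a') ⊗ₜ[K] (Fᵀ b')) = Gᵀ (a', b') := (hcolG (a', b')).symm
          rw [this]
          exact Submodule.subset_span (Set.mem_range_self _)
        | zero =>
          rw [TensorProduct.tmul_zero, Φ.map_zero]
          exact Submodule.zero_mem _
        | add y z hy hz ihy ihz =>
          rw [TensorProduct.tmul_add, Φ.map_add]
          exact Submodule.add_mem _ ihy ihz
        | smul c y hy ihy =>
          rw [TensorProduct.tmul_smul, Φ.map_smul]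
          exact Submodule.smul_mem _ _ ihy
      | zero =>
        rw [TensorProduct.zero_tmul, Φ.map_zero]
        exact Submodule.zero_mem _
      | add x z hx hz ihx ihz =>
        rw [TensorProduct.add_tmul, Φ.map_add]
        exact Submodule.add_mem _ ihx ihz
      | smul c x hx ihx =>
        rw [← TensorProduct.smul_tmul', Φ.map_smul]
        exact Submodule.smul_mem _ _ ihx
  have hinj : Function.Injective (TensorProduct.mapIncl U V) :=
    Module.Flat.tensorProduct_mapIncl_injective_of_right U V
  rw [rank_eq_finrank_span_cols_transpose, ← hW, key, LinearEquiv.finrank_map_eq,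
    LinearMap.finrank_range_of_inj hinj, Module.finrank_tensorProduct,
    rank_eq_finrank_span_cols_transpose, rank_eq_finrank_span_cols_transpose]

end Aux

lemma nat_log_eq_zero_imp {n : ℕ} (h : Real.log n = 0) (hn : n ≠ 0) : n = 1 := by
  by_contra h1
  have h2 : 2 ≤ n := by omega
  have : (0 : ℝ) < Real.log n := Real.log_pos (by exact_mod_cast by omega)
  linarith [this.ne' h]

/-- If a four-party pure state is a product across the `AD : BC` cut
(`r_AD = 1`), then `r_AB = r_A · r_B`.  Consequently, no four-party pure state
has 0-entropy vector proportional to `(1,1,1,1,1,1,0)` in the ordering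
`(S₀(A), S₀(B), S₀(C), S₀(D), S₀(AB), S₀(AC), S₀(AD))`. -/
lemma part1_aux : ∀ (dA dB dC dD : ℕ) (ψ : Fin dA → Fin dB → Fin dC → Fin dD → ℂ), ψ ≠ 0 →
    (mAD ψ).rank = 1 → (mAB ψ).rank = (mA ψ).rank * (mB ψ).rank := by
  intro dA dB dC dD ψ hψ hAD
  obtain ⟨u, v, hu, hv, huv⟩ := rank_one_decomp (mAD ψ) hAD
  have hψeq : ∀ a b c d, ψ a b c d = u (a, d) * v (b, c) := by
    intro a b c d
    exact huv (a, d) (b, c)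
  set E : Matrix (Fin dA) (Fin dD) ℂ := Matrix.of fun a d => u (a, d) with hE
  set F : Matrix (Fin dB) (Fin dC) ℂ := Matrix.of fun b c => v (b, c) with hF
  obtain ⟨⟨a0, d0⟩, ha0⟩ := Function.ne_iff.mp hu
  obtain ⟨⟨b0, c0⟩, hb0⟩ := Function.ne_iff.mp hv
  have hrA : (mA ψ).rank = E.rank := by
    apply rank_eq_of_cols_smul E (mA ψ) (fun x => v (x.1, x.2.1)) (fun x => x.2.2)
    · intro x a
      simp only [mA, Matrix.of_apply, hE]
      rw [hψeq, mul_comm]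
    · intro j
      exact ⟨(b0, c0, j), rfl, by simpa using hb0⟩
  have hrB : (mB ψ).rank = F.rank := by
    apply rank_eq_of_cols_smul F (mB ψ) (fun x => u (x.1, x.2.2)) (fun x => x.2.1)
    · intro x b
      simp only [mB, Matrix.of_apply, hF]
      rw [hψeq]
    · intro j
      exact ⟨(a0, j, d0), rfl, by simpa using ha0⟩
  have hrAB : (mAB ψ).rank = E.rank * F.rank := by
    have hsub : mAB ψ =
        (Matrix.of fun (p : Fin dA × Fin dB) (q : Fin dD × Fin dC) =>
          E p.1 q.1 * F p.2 q.2).submatrix id (Equiv.prodComm (Fin dC) (Fin dD)) := by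
      ext ⟨a, b⟩ ⟨c, d⟩
      simp [mAB, hψeq, hE, hF]
    rw [hsub, rank_submatrix_id_equiv, rank_kron]
  rw [hrA, hrB, hrAB]

theorem rank_AB_eq_of_rank_AD_eq_one :
    (∀ (dA dB dC dD : ℕ) (ψ : Fin dA → Fin dB → Fin dC → Fin dD → ℂ), ψ ≠ 0 →
      (mAD ψ).rank = 1 → (mAB ψ).rank = (mA ψ).rank * (mB ψ).rank) ∧
    ¬ ∃ (dA dB dC dD : ℕ) (ψ : Fin dA → Fin dB → Fin dC → Fin dD → ℂ) (t : ℝ),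
        ψ ≠ 0 ∧ 0 < t ∧
        Real.log (mA ψ).rank = t ∧ Real.log (mB ψ).rank = t ∧
        Real.log (mC ψ).rank = t ∧ Real.log (mD ψ).rank = t ∧
        Real.log (mAB ψ).rank = t ∧ Real.log (mAC ψ).rank = t ∧
        Real.log (mAD ψ).rank = 0 := by
  refine ⟨part1_aux, ?_⟩
  rintro ⟨dA, dB, dC, dD, ψ, t, hψ, ht, hA, hB, hC, hD, hAB, hAC, hAD⟩
  have hADne : (mAD ψ).rank ≠ 0 := by
    intro h0
    apply hψ
    have hz := matrix_eq_zero_of_rank_eq_zero (mAD ψ) h0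
    funext a b c d
    have := congrFun (congrFun hz (a, d)) (b, c)
    simpa [mAD] using this
  have hAD1 : (mAD ψ).rank = 1 := nat_log_eq_zero_imp hAD hADne
  have hmul := (part1_aux dA dB dC dD ψ hψ hAD1)
  have hrAne : (mA ψ).rank ≠ 0 := by
    intro h0
    rw [h0] at hA
    simp at hA
    linarith
  have hrBne : (mB ψ).rank ≠ 0 := by
    intro h0
    rw [h0] at hB
    simp at hB
    linarith
  rw [hmul] at hAB
  rw [Nat.cast_mul, Real.log_mul (by exact_mod_cast hrAne) (by exact_mod_cast hrBne),
    hA, hB] at hAB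
  linarith
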